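/- arXiv:2401.04664 — 12 statements merged into one kernel-verified Lean document; each statement's English description precedes it below -/
import Mathlib

section
/- Let x, k, r be positive integers and let p be a prime. Then x^3 + (x+1)^3 + ... + (x+k-1)^3 = p^(2r) if and only if either there exists a positive integer c with x = p^(2c), k = 1 and r = 3c, or (x, k, p, r) = (1, 2, 3, 1). -/
set_option maxHeartbeats 800000

lemma four_mul_sum_cubes (n : ℕ) :
    4 * ∑ i ∈ Finset.range (n + 1), i ^ 3 = (n * (n + 1)) ^ 2 := by
  induction n with
  | zero => simp
  | succ n ih =>
    rw [Finset.sum_range_succ, Nat.mul_add, ih]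
    ring

theorem sum_consecutive_cubes_eq_prime_power_sq (x k r p : ℕ) (hx : 0 < x) (hk : 0 < k)
    (hr : 0 < r) (hp : p.Prime) :
    (∑ i ∈ Finset.range k, (x + i) ^ 3 = p ^ (2 * r)) ↔
      ((∃ c : ℕ, 0 < c ∧ x = p ^ (2 * c) ∧ k = 1 ∧ r = 3 * c) ∨
        (x = 1 ∧ k = 2 ∧ p = 3 ∧ r = 1)) := by
  constructor
  · intro hS
    obtain ⟨y, rfl⟩ : ∃ y, x = y + 1 := ⟨x - 1, by omega⟩
    obtain ⟨j, rfl⟩ : ∃ j, k = j + 1 := ⟨k - 1, by omega⟩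
    rcases Nat.eq_zero_or_pos j with rfl | hj
    · -- k = 1 : x^3 = p^(2r)
      left
      rw [Finset.sum_range_one] at hS
      have hx3 : (y + 1) ^ 3 = p ^ (2 * r) := by simpa using hS
      have hxdvd : (y + 1) ∣ p ^ (2 * r) := ⟨(y + 1) ^ 2, by rw [← hx3]; ring⟩
      obtain ⟨m, hm, hxm⟩ := (Nat.dvd_prime_pow hp).mp hxdvd
      have hpow : p ^ (3 * m) = p ^ (2 * r) := by
        rw [← hx3, hxm, ← pow_mul, mul_comm m 3]
      have h3m : 3 * m = 2 * r := Nat.pow_right_injective hp.two_le hpow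
      obtain ⟨c, hc⟩ : ∃ c, m = 2 * c := ⟨m / 2, by omega⟩
      exact ⟨c, by omega, by rw [hxm, hc], rfl, by omega⟩
    · -- k ≥ 2
      have hsplit : (∑ i ∈ Finset.range ((y + 1) + (j + 1)), i ^ 3)
          = (∑ i ∈ Finset.range (y + 1), i ^ 3)
            + ∑ i ∈ Finset.range (j + 1), (y + 1 + i) ^ 3 :=
        Finset.sum_range_add (fun i => i ^ 3) (y + 1) (j + 1)
      have key : (y * (y + 1)) ^ 2 + 4 * p ^ (2 * r)
          = ((y + j + 1) * (y + j + 2)) ^ 2 := by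
        calc (y * (y + 1)) ^ 2 + 4 * p ^ (2 * r)
            = 4 * (∑ i ∈ Finset.range (y + 1), i ^ 3)
              + 4 * (∑ i ∈ Finset.range (j + 1), (y + 1 + i) ^ 3) := by
              rw [four_mul_sum_cubes y, hS]
          _ = 4 * ∑ i ∈ Finset.range ((y + 1) + (j + 1)), i ^ 3 := by
              rw [hsplit]; ring
          _ = ((y + j + 1) * (y + j + 2)) ^ 2 := by
              rw [show (y + 1) + (j + 1) = (y + j + 1) + 1 by ring]
              exact four_mul_sum_cubes (y + j + 1)
      obtain ⟨A, hA⟩ : ∃ A, y * (y + 1) = 2 * A := (Nat.even_mul_succ_self y).two_dvd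
      obtain ⟨B, hB⟩ : ∃ B, (y + j + 1) * (y + j + 2) = 2 * B :=
        (Nat.even_mul_succ_self (y + j + 1)).two_dvd
      have hppos : 0 < p ^ (2 * r) := pow_pos hp.pos _
      have hAB : A ^ 2 + p ^ (2 * r) = B ^ 2 := by nlinarith [key, hA, hB]
      have hBA : A < B := by nlinarith
      obtain ⟨D, hD, hDpos⟩ : ∃ D, B = A + D ∧ 0 < D := ⟨B - A, by omega, by omega⟩
      have hprod : D * (D + 2 * A) = p ^ (2 * r) := by nlinarith
      obtain ⟨s, hsle, hDps⟩ := (Nat.dvd_prime_pow hp).mp ⟨D + 2 * A, hprod.symm⟩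
      have hE : D + 2 * A = p ^ (2 * r - s) := by
        have h1 : p ^ s * (D + 2 * A) = p ^ s * p ^ (2 * r - s) := by
          rw [← pow_add, show s + (2 * r - s) = 2 * r from by omega, ← hprod, hDps]
        exact Nat.eq_of_mul_eq_mul_left (pow_pos hp.pos s) h1
      rcases Nat.eq_zero_or_pos y with rfl | hy
      · -- x = 1, k ≥ 2
        right
        have hA0 : A = 0 := by omega
        subst hA0
        have hD2 : D ^ 2 = (p ^ r) ^ 2 := by
          rw [← pow_mul, mul_comm r 2, ← hprod]; ring
        have hDpr : D = p ^ r := Nat.pow_left_injective two_ne_zero hD2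
        have hkk : (j + 1) * (j + 2) = 2 * p ^ r := by
          have : 2 * B = (j + 1) * (j + 2) := by linarith [hB]
          omega
        have hpdvd : p ∣ (j + 1) * (j + 2) := by
          rw [hkk]
          exact Dvd.dvd.mul_left (dvd_pow_self p hr.ne') 2
        have hdvd1 : (j + 1) ∣ 2 * p ^ r := ⟨j + 2, by omega⟩
        have hdvd2 : (j + 2) ∣ 2 * p ^ r := ⟨j + 1, by rw [← hkk]; ring⟩
        rcases (Nat.Prime.dvd_mul hp).mp hpdvd with hpk | hpk
        · -- p ∣ k : then k + 1 = j + 2 divides 2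
          have hnp : ¬ p ∣ (j + 2) := by
            intro h
            have h2 := Nat.dvd_sub h hpk
            rw [show j + 2 - (j + 1) = 1 by omega] at h2
            have := Nat.dvd_one.mp h2
            have := hp.one_lt
            omega
          have hcop : (j + 2).Coprime (p ^ r) :=
            (Nat.coprime_comm.mp ((hp.coprime_iff_not_dvd).mpr hnp)).pow_right _
          have hle2 : (j + 2) ∣ 2 := hcop.dvd_of_dvd_mul_right hdvd2
          have := Nat.le_of_dvd two_pos hle2
          omega
        · -- p ∣ k + 1 : then k = j + 1 divides 2, so k = 2
          have hnp : ¬ p ∣ (j + 1) := by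
            intro h
            have h2 := Nat.dvd_sub hpk h
            rw [show j + 2 - (j + 1) = 1 by omega] at h2
            have := Nat.dvd_one.mp h2
            have := hp.one_lt
            omega
          have hcop : (j + 1).Coprime (p ^ r) :=
            (Nat.coprime_comm.mp ((hp.coprime_iff_not_dvd).mpr hnp)).pow_right _
          have h2 : (j + 1) ∣ 2 := hcop.dvd_of_dvd_mul_right hdvd1
          have hj2 : j = 1 := by
            have := Nat.le_of_dvd two_pos h2
            omega
          subst hj2
          have hp3 : p ^ r = 3 := by omega
          have hpe : p = 3 := by
            have : p ∣ 3 := hp3 ▸ dvd_pow_self p hr.ne'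
            rcases (Nat.prime_dvd_prime_iff_eq hp (by norm_num)).mp this with h
            exact h
          subst hpe
          have hr1 : r = 1 := Nat.pow_right_injective (a := 3) (by norm_num) (by simpa using hp3)
          exact ⟨rfl, rfl, rfl, hr1⟩
      · -- x ≥ 2, k ≥ 2 : contradiction
        exfalso
        obtain ⟨i, rfl⟩ : ∃ i, j = i + 1 := ⟨j - 1, by omega⟩
        have hDlow : 2 * y + 3 ≤ D := by nlinarith [hA, hB, hD]
        have hsle2 : s ≤ 2 * r - s := by
          have hle : p ^ s ≤ p ^ (2 * r - s) := by
            rw [← hDps, ← hE]; omega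
          exact (Nat.pow_le_pow_iff_right hp.one_lt).mp hle
        have hdvd2A : p ^ s ∣ 2 * A := by
          have h1 : p ^ s ∣ p ^ (2 * r - s) := pow_dvd_pow p hsle2
          have h2 : 2 * A = p ^ (2 * r - s) - p ^ s := by omega
          rw [h2]
          exact Nat.dvd_sub h1 (dvd_refl _)
        have hdvd : p ^ s ∣ y * (y + 1) := hA ▸ hdvd2A
        by_cases hpy : p ∣ (y + 1)
        · have hnp : ¬ p ∣ y := by
            intro h
            have h2 := Nat.dvd_sub hpy h
            rw [show y + 1 - y = 1 by omega] at h2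
            have := Nat.dvd_one.mp h2
            have := hp.one_lt
            omega
          have hcop : (p ^ s).Coprime y := ((hp.coprime_iff_not_dvd).mpr hnp).pow_left _
          have h1 : p ^ s ∣ y + 1 := hcop.dvd_of_dvd_mul_left hdvd
          have := Nat.le_of_dvd (by omega) h1
          omega
        · have hcop : (p ^ s).Coprime (y + 1) := ((hp.coprime_iff_not_dvd).mpr hpy).pow_left _
          have h1 : p ^ s ∣ y := hcop.dvd_of_dvd_mul_right hdvd
          have := Nat.le_of_dvd hy h1
          omega
  · rintro (⟨c, hc, rfl, rfl, rfl⟩ | ⟨rfl, rfl, rfl, rfl⟩)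
    · simp only [Finset.sum_range_one, add_zero, ← pow_mul]
      congr 1
      ring
    · norm_num [Finset.sum_range_succ]
end

section
/- Let x, k, y be positive integers with y > 1 such that x^3 + (x+1)^3 + ... + (x+k-1)^3 = y^2. If (x, k, y) is not of the form (p^(2c), 1, p^(3c)) for some prime p and positive integer c, and (x, k, y) ≠ (1, 2, 3), then y is divisible by at least two distinct primes. -/
open Finset

private lemma cube_sum (n : ℕ) :
    ∑ i ∈ Finset.range n, i ^ 3 = (∑ i ∈ Finset.range n, i) ^ 2 := by
  induction n with
  | zero => simp
  | succ n ih =>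
    rw [Finset.sum_range_succ, Finset.sum_range_succ, ih]
    rcases n with _ | m
    · simp
    · have h := Finset.sum_range_id_mul_two (m + 1)
      rw [show m + 1 - 1 = m from rfl] at h
      nlinarith [h]

private lemma final_contra (e x k : ℕ)
    (h2e : e * 2 + (x + 2) * (x + 1) = (x + 2 + (k + 2)) * (x + k + 3))
    (hele : e ≤ x + 2) : False := by nlinarith

theorem sum_consecutive_cubes_sq_two_prime_divisors (x k y : ℕ) (hx : 0 < x) (hk : 0 < k)
    (hy : 1 < y) (hsum : ∑ i ∈ Finset.range k, (x + i) ^ 3 = y ^ 2)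
    (hnot : ¬ ∃ (p c : ℕ), p.Prime ∧ 0 < c ∧ x = p ^ (2 * c) ∧ k = 1 ∧ y = p ^ (3 * c))
    (hne : ¬ (x = 1 ∧ k = 2 ∧ y = 3)) :
    ∃ p q : ℕ, p.Prime ∧ q.Prime ∧ p ≠ q ∧ p ∣ y ∧ q ∣ y := by
  by_contra hcon
  push_neg at hcon
  -- y is a prime power p ^ μ
  have hy0 : y ≠ 0 := by omega
  have hp : (y.minFac).Prime := Nat.minFac_prime (by omega)
  set p := y.minFac with hpdef
  have huni : ∀ {d : ℕ}, d.Prime → d ∣ y → d = p := by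
    intro d hd hdy
    by_contra hdp
    exact hcon d p hd hp hdp hdy (Nat.minFac_dvd y)
  have hyp : y = p ^ y.primeFactorsList.length :=
    Nat.eq_prime_pow_of_unique_prime_dvd hy0 huni
  set μ := y.primeFactorsList.length with hμdef
  have hμ : 0 < μ := by
    rcases Nat.eq_zero_or_pos μ with h | h
    · rw [h, pow_zero] at hyp; omega
    · exact h
  have hy2 : y ^ 2 = p ^ (2 * μ) := by rw [hyp, ← pow_mul, mul_comm]
  -- Case k = 1
  rcases eq_or_lt_of_le (show 1 ≤ k from hk) with hk1 | hk2
  · have hx3 : x ^ 3 = y ^ 2 := by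
      rw [← hsum, ← hk1]; simp
    have hxd : x ∣ p ^ (2 * μ) := by
      rw [← hy2, ← hx3]; exact dvd_pow_self x (by norm_num)
    obtain ⟨e, _, hxe⟩ := (Nat.dvd_prime_pow hp).1 hxd
    have hpe : p ^ (3 * e) = p ^ (2 * μ) := by
      rw [mul_comm 3 e, pow_mul, ← hxe, hx3, hy2]
    have h3e : 3 * e = 2 * μ := Nat.pow_right_injective hp.two_le hpe
    obtain ⟨c, hc1, hc2⟩ : ∃ c, e = 2 * c ∧ μ = 3 * c := ⟨e / 2, by omega⟩
    exact hnot ⟨p, c, hp, by omega, by rw [hxe, hc1], hk1.symm, by rw [hyp, hc2]⟩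
  -- Now k ≥ 2. Set up triangular-number framework.
  set C := ∑ i ∈ Finset.range x, i with hCdef
  set D := ∑ i ∈ Finset.range (x + k), i with hDdef
  set e := ∑ i ∈ Finset.range k, (x + i) with hedef
  have hsplit : D = C + e := Finset.sum_range_add (fun i => i) x k
  have hcubesplit : ∑ i ∈ Finset.range (x + k), i ^ 3
      = (∑ i ∈ Finset.range x, i ^ 3) + ∑ i ∈ Finset.range k, (x + i) ^ 3 :=
    Finset.sum_range_add (fun i => i ^ 3) x k
  have hD2 : D ^ 2 = C ^ 2 + y ^ 2 := by
    rw [← cube_sum, ← cube_sum, hcubesplit, hsum]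
  have key : e * (D + C) = y ^ 2 := by
    rw [hsplit] at hD2; nlinarith [hD2]
  set f := D + C with hfdef
  have h2C : C * 2 = x * (x - 1) := Finset.sum_range_id_mul_two x
  have h2D : D * 2 = (x + k) * (x + k - 1) := Finset.sum_range_id_mul_two (x + k)
  -- Case x = 1
  rcases eq_or_lt_of_le (show 1 ≤ x from hx) with hx1 | hx2
  · have hC0 : C = 0 := by rw [hCdef, ← hx1]; simp
    have hfe : f = e := by rw [hfdef, hsplit, hC0]; ring
    have hD2' : e ^ 2 = (p ^ μ) ^ 2 := by
      rw [← hyp, ← key, hfe]; ring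
    have heD : e = p ^ μ := Nat.pow_left_injective (by norm_num) hD2'
    have hkk : k * (k + 1) = 2 * p ^ μ := by
      have hDe : D = e := by rw [hsplit, hC0, zero_add]
      rw [hDe, heD, ← hx1, show 1 + k - 1 = k by omega,
        show (1 + k) * k = k * (k + 1) by ring] at h2D
      linarith [h2D]
    have hpdvd : p ^ μ ∣ k * (k + 1) := ⟨2, by linarith [hkk]⟩
    have hppos : 0 < p ^ μ := pow_pos hp.pos μ
    by_cases hpk : p ∣ k
    · have hpk1 : ¬ p ∣ (k + 1) := by
        intro h
        have h1 : p ∣ 1 := by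
          have h2 := Nat.dvd_sub h hpk
          simpa using h2
        have := Nat.le_of_dvd one_pos h1
        have := hp.two_le
        omega
      have hdk : p ^ μ ∣ k := hp.prime.pow_dvd_of_dvd_mul_right μ hpk1 hpdvd
      obtain ⟨c, hc⟩ := hdk
      have hck : c * (k + 1) = 2 := by
        have h2 : p ^ μ * (c * (k + 1)) = p ^ μ * 2 := by
          rw [← mul_assoc, ← hc]; linarith [hkk]
        exact Nat.eq_of_mul_eq_mul_left hppos h2
      have : k + 1 ≤ 2 := Nat.le_of_dvd (by norm_num) ⟨c, by rw [mul_comm (k + 1) c]; exact hck.symm⟩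
      omega
    · have hdk : p ^ μ ∣ (k + 1) := hp.prime.pow_dvd_of_dvd_mul_left μ hpk hpdvd
      obtain ⟨c, hc⟩ := hdk
      have hck : c * k = 2 := by
        have h2 : p ^ μ * (c * k) = p ^ μ * 2 := by
          rw [← mul_assoc, ← hc]; linarith [hkk]
        exact Nat.eq_of_mul_eq_mul_left hppos h2
      have hkle : k ≤ 2 := Nat.le_of_dvd (by norm_num) ⟨c, by rw [mul_comm k c]; exact hck.symm⟩
      have hk2' : k = 2 := by omega
      have hc1 : c = 1 := by rw [hk2'] at hck; omega
      have hy3 : y = 3 := by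
        rw [hc1, mul_one] at hc
        rw [hyp, ← hc, hk2']
      exact hne ⟨hx1.symm, hk2', hy3⟩
  -- Case x ≥ 2
  · have he_dvd : e ∣ p ^ (2 * μ) := ⟨f, by rw [← hy2, ← key]⟩
    have hf_dvd : f ∣ p ^ (2 * μ) := ⟨e, by rw [← hy2, ← key]; ring⟩
    obtain ⟨s, hs, hes⟩ := (Nat.dvd_prime_pow hp).1 he_dvd
    obtain ⟨t, ht, hft⟩ := (Nat.dvd_prime_pow hp).1 hf_dvd
    have hCpos : 0 < C := by
      rcases Nat.eq_zero_or_pos C with h | h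
      · exfalso
        rw [h, zero_mul] at h2C
        have := Nat.mul_pos (show 0 < x by omega) (show 0 < x - 1 by omega)
        omega
      · exact h
    have hef_lt : e < f := by
      have hfe2 : f = e + 2 * C := by rw [hfdef, hsplit]; ring
      omega
    have hst : s < t := by
      rw [hes, hft] at hef_lt
      exact (Nat.pow_lt_pow_iff_right hp.one_lt).mp hef_lt
    have hdvd_ef : e ∣ f := by rw [hes, hft]; exact pow_dvd_pow p hst.le
    have hfeX : f = e + x * (x - 1) := by
      rw [← h2C, hfdef, hsplit]; ring
    have hdvdX : e ∣ x * (x - 1) := by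
      have h := Nat.dvd_sub hdvd_ef (dvd_refl e)
      rwa [hfeX, Nat.add_sub_cancel_left] at h
    have hele : e ≤ x := by
      by_cases hpx : p ∣ x
      · have hpx1 : ¬ p ∣ (x - 1) := by
          intro h
          have h1 : p ∣ 1 := by
            have h2 := Nat.dvd_sub hpx h
            rwa [show x - (x - 1) = 1 by omega] at h2
          have := Nat.le_of_dvd one_pos h1
          have := hp.two_le
          omega
        have hds : p ^ s ∣ x :=
          hp.prime.pow_dvd_of_dvd_mul_right s hpx1 (hes ▸ hdvdX)
        calc e = p ^ s := hes
          _ ≤ x := Nat.le_of_dvd (by omega) hds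
      · have hds : p ^ s ∣ x - 1 :=
          hp.prime.pow_dvd_of_dvd_mul_left s hpx (hes ▸ hdvdX)
        have h1 : e ≤ x - 1 := hes ▸ Nat.le_of_dvd (by omega) hds
        omega
    have h2e : e * 2 + x * (x - 1) = (x + k) * (x + k - 1) := by
      rw [← h2C, ← h2D, hsplit]; ring
    obtain ⟨k', rfl⟩ : ∃ k', k = k' + 2 := ⟨k - 2, by omega⟩
    obtain ⟨x', rfl⟩ : ∃ x', x = x' + 2 := ⟨x - 2, by omega⟩
    rw [show x' + 2 + (k' + 2) - 1 = x' + k' + 3 by omega,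
        show x' + 2 - 1 = x' + 1 by omega] at h2e
    exact final_contra e x' k' h2e hele
end

section
/- For all positive integers x and k with k even, the integer 2x + k − 1 divides ∑_{i=x}^{x+k-1} i^3. -/
lemma add_dvd_pow_three_add (a b : ℕ) : (a + b) ∣ (a ^ 3 + b ^ 3) := by
  have h : ((a : ℤ) + b) ∣ ((a : ℤ) ^ 3 + (b : ℤ) ^ 3) :=
    ⟨a ^ 2 - a * b + b ^ 2, by ring⟩
  exact_mod_cast h

theorem dvd_sum_consecutive_cubes_of_even (x k : ℕ) (hx : 0 < x) (hk : 0 < k)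
    (hke : Even k) : (2 * x + k - 1) ∣ ∑ i ∈ Finset.range k, (x + i) ^ 3 := by
  set n := 2 * x + k - 1 with hn
  obtain ⟨m, hm⟩ := hke
  have hodd : Odd n := ⟨x + m - 1, by omega⟩
  have key : n ∣ 2 * ∑ i ∈ Finset.range k, (x + i) ^ 3 := by
    have h2 : 2 * ∑ i ∈ Finset.range k, (x + i) ^ 3 =
        ∑ i ∈ Finset.range k, ((x + i) ^ 3 + (x + (k - 1 - i)) ^ 3) := by
      rw [Finset.sum_add_distrib, two_mul]
      congr 1
      exact (Finset.sum_range_reflect (fun i => (x + i) ^ 3) k).symm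
    rw [h2]
    apply Finset.dvd_sum
    intro i hi
    rw [Finset.mem_range] at hi
    have heq : (x + i) + (x + (k - 1 - i)) = n := by omega
    have := add_dvd_pow_three_add (x + i) (x + (k - 1 - i))
    rwa [heq] at this
  have hcop : Nat.Coprime n 2 := by
    exact hodd.coprime_two_right
  exact hcop.dvd_of_dvd_mul_left key
end

section
/- For all positive integers x and k with k odd, the integer 2x + k − 1 is even and (2x + k − 1)/2 divides ∑_{i=x}^{x+k-1} i^3. -/
lemma sum_consecutive_cubes_closed (x j : ℕ) :
    ∑ i ∈ Finset.range (2 * j + 1), (x + i) ^ 3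
      = (x + j) * ((2 * j + 1) * ((x + j) ^ 2 + j * (j + 1))) := by
  induction j with
  | zero => simp; ring
  | succ j ih =>
    have h : 2 * (j + 1) + 1 = (2 * j + 1) + 1 + 1 := by ring
    rw [h, Finset.sum_range_succ, Finset.sum_range_succ, ih]
    ring

theorem half_dvd_sum_consecutive_cubes_of_odd (x k : ℕ) (hx : 0 < x) (hk : 0 < k)
    (hko : Odd k) :
    Even (2 * x + k - 1) ∧ (2 * x + k - 1) / 2 ∣ ∑ i ∈ Finset.range k, (x + i) ^ 3 := by
  obtain ⟨j, rfl⟩ := hko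
  constructor
  · exact ⟨x + j, by omega⟩
  · have hdiv : (2 * x + (2 * j + 1) - 1) / 2 = x + j := by omega
    rw [hdiv, sum_consecutive_cubes_closed]
    exact Dvd.intro _ rfl
end

section
/- Let m be an odd positive integer and let x, k be positive integers. If k is even, then 2x + k − 1 divides ∑_{i=x}^{x+k-1} i^m; if k is odd, then 2x + k − 1 is even and (2x + k − 1)/2 divides ∑_{i=x}^{x+k-1} i^m. -/
theorem dvd_sum_consecutive_odd_powers (m x k : ℕ) (hm : 0 < m) (hmo : Odd m)
    (hx : 0 < x) (hk : 0 < k) :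
    (Even k → (2 * x + k - 1) ∣ ∑ i ∈ Finset.range k, (x + i) ^ m) ∧
      (Odd k → Even (2 * x + k - 1) ∧
        (2 * x + k - 1) / 2 ∣ ∑ i ∈ Finset.range k, (x + i) ^ m) := by
  set S := ∑ i ∈ Finset.range k, (x + i) ^ m with hS
  set N := 2 * x + k - 1 with hN
  have h2S : N ∣ 2 * S := by
    have hrefl : S = ∑ i ∈ Finset.range k, (x + (k - 1 - i)) ^ m := by
      rw [hS, ← Finset.sum_range_reflect]
    have : 2 * S = ∑ i ∈ Finset.range k, ((x + i) ^ m + (x + (k - 1 - i)) ^ m) := by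
      rw [Finset.sum_add_distrib, two_mul, ← hS, ← hrefl]
    rw [this]
    apply Finset.dvd_sum
    intro i hi
    have hik : i ≤ k - 1 := Nat.le_sub_one_of_lt (Finset.mem_range.mp hi)
    have hsum : (x + i) + (x + (k - 1 - i)) = N := by
      rw [hN]; omega
    rw [← hsum]
    exact hmo.nat_add_dvd_pow_add_pow _ _
  constructor
  · intro hke
    have hNodd : ¬ 2 ∣ N := by
      obtain ⟨t, ht⟩ := hke; omega
    have hcop : Nat.Coprime N 2 :=
      Nat.Coprime.symm (Nat.Prime.coprime_iff_not_dvd Nat.prime_two |>.mpr hNodd)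
    exact (Nat.Coprime.dvd_of_dvd_mul_left hcop h2S)
  · intro hko
    have hNe : Even N := by
      obtain ⟨t, ht⟩ := hko
      exact ⟨x + t, by rw [hN]; omega⟩
    refine ⟨hNe, ?_⟩
    obtain ⟨t, ht⟩ := hNe
    have hNt : N = 2 * t := by rw [ht, two_mul]
    have : 2 * t ∣ 2 * S := hNt ▸ h2S
    have := (mul_dvd_mul_iff_left (two_ne_zero)).mp this
    rw [hNt, Nat.mul_div_cancel_left _ two_pos]; exact this
end

section
/- Let x > 1 and k be positive integers with k even, let p be a prime and r a positive integer. If ∑_{i=x}^{x+k-1} i^3 = p^(2r), then there exists an integer t with 0 < t < 2r such that 2x + k − 1 = p^t. -/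
lemma cube_sum_closed (x a : ℕ) :
    ∑ i ∈ Finset.range (2*a+2), (x+i)^3
      = (a+1) * (2*x + 2*a + 1) * (x^2 + (2*a+1)*x + (a+1)*(2*a+1)) := by
  induction a with
  | zero => simp [Finset.sum_range_succ]; ring
  | succ n ih =>
    have h : 2*(n+1)+2 = (2*n+2) + 1 + 1 := by ring
    rw [h, Finset.sum_range_succ, Finset.sum_range_succ, ih]; ring

theorem exists_t_of_even_k (x k p r : ℕ) (hx : 1 < x) (hk : 0 < k) (hke : Even k)
    (hp : p.Prime) (hr : 0 < r)
    (hsum : ∑ i ∈ Finset.range k, (x + i) ^ 3 = p ^ (2 * r)) :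
    ∃ t : ℕ, 0 < t ∧ t < 2 * r ∧ 2 * x + k - 1 = p ^ t := by
  obtain ⟨a, ha⟩ := hke
  have ha1 : 1 ≤ a := by omega
  obtain ⟨b, hb⟩ : ∃ b, a = b + 1 := ⟨a - 1, by omega⟩
  have hk2 : k = 2*b+2 := by omega
  rw [hk2] at hsum
  rw [cube_sum_closed] at hsum
  set m := 2*x + 2*b + 1 with hm
  have hmdvd : m ∣ p ^ (2*r) := ⟨(b+1) * (x^2 + (2*b+1)*x + (b+1)*(2*b+1)), by
    rw [← hsum]; ring⟩
  obtain ⟨t, ht, hmt⟩ := (Nat.dvd_prime_pow hp).mp hmdvd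
  have hm1 : 1 < m := by omega
  have ht0 : 0 < t := by
    rcases Nat.eq_zero_or_pos t with h | h
    · rw [h, pow_zero] at hmt; omega
    · exact h
  have hc : 1 < (b+1) * (x^2 + (2*b+1)*x + (b+1)*(2*b+1)) := by
    have hx2 : 1 < x^2 := by nlinarith
    have h1 : x^2 ≤ x^2 + (2*b+1)*x + (b+1)*(2*b+1) := by omega
    have hle : x^2 ≤ (b+1) * (x^2 + (2*b+1)*x + (b+1)*(2*b+1)) :=
      h1.trans (Nat.le_mul_of_pos_left _ (by omega))
    linarith
  have hmlt : m < p ^ (2*r) := by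
    have : m * ((b+1) * (x^2 + (2*b+1)*x + (b+1)*(2*b+1))) = p ^ (2*r) := by
      rw [← hsum]; ring
    nlinarith
  have htlt : t < 2*r := by
    rw [hmt] at hmlt
    exact (Nat.pow_lt_pow_iff_right hp.one_lt).mp hmlt
  exact ⟨t, ht0, htlt, by omega⟩
end

section
/- Let x > 1 and k be positive integers with k odd, let p be a prime and r a positive integer. If ∑_{i=x}^{x+k-1} i^3 = p^(2r), then there exists an integer t with 0 < t < 2r such that 2x + k − 1 = 2·p^t. -/
lemma cube_sum_identity (x k : ℕ) (hx : 1 ≤ x) :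
    4 * ∑ i ∈ Finset.range k, (x + i) ^ 3 + ((x - 1) * x) ^ 2
      = ((x + k - 1) * (x + k)) ^ 2 := by
  induction k with
  | zero => simp
  | succ k ih =>
    rw [Finset.sum_range_succ]
    obtain ⟨a, rfl⟩ : ∃ a, x = a + 1 := ⟨x - 1, by omega⟩
    have h1 : a + 1 + k - 1 = a + k := by omega
    have h2 : a + 1 + (k + 1) - 1 = a + k + 1 := by omega
    rw [h2]; rw [h1] at ih
    nlinarith [ih]

theorem exists_t_of_odd_k (x k p r : ℕ) (hx : 1 < x) (hk : 0 < k) (hko : Odd k)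
    (hp : p.Prime) (hr : 0 < r)
    (hsum : ∑ i ∈ Finset.range k, (x + i) ^ 3 = p ^ (2 * r)) :
    ∃ t : ℕ, 0 < t ∧ t < 2 * r ∧ 2 * x + k - 1 = 2 * p ^ t := by
  obtain ⟨h, rfl⟩ : ∃ h, k = 2 * h + 1 := by
    obtain ⟨h, hh⟩ := hko; exact ⟨h, by omega⟩
  set m := x + h with hm
  have key := cube_sum_identity x (2 * h + 1) (by omega)
  rw [hsum] at key
  obtain ⟨a, rfl⟩ : ∃ a, x = a + 1 := ⟨x - 1, by omega⟩
  have h1 : a + 1 + (2 * h + 1) - 1 = a + 2 * h + 1 := by omega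
  have h2 : a + 1 + (2 * h + 1) = a + 2 * h + 2 := by omega
  have h3 : a + 1 - 1 = a := by omega
  rw [h1, h2, h3] at key
  -- p^(2r) = (2h+1) * m * (m^2 + h*(h+1))
  have hfact : p ^ (2 * r) = (2 * h + 1) * m * (m ^ 2 + h * (h + 1)) := by
    have h4 : 4 * ((2 * h + 1) * (a + 1 + h) * ((a + 1 + h) ^ 2 + h * (h + 1)))
        + (a * (a + 1)) ^ 2 = ((a + 2 * h + 1) * (a + 2 * h + 2)) ^ 2 := by ring
    rw [hm]
    linarith [key, h4]
  have hdvd : m ∣ p ^ (2 * r) := ⟨(2 * h + 1) * (m ^ 2 + h * (h + 1)), by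
    rw [hfact]; ring⟩
  obtain ⟨t, ht, hmt⟩ := (Nat.dvd_prime_pow hp).mp hdvd
  have hm2 : 2 ≤ m := by omega
  have ht0 : 0 < t := by
    rcases Nat.eq_zero_or_pos t with h0 | h0
    · rw [h0, pow_zero] at hmt; omega
    · exact h0
  have hlt : m < p ^ (2 * r) := by
    rw [hfact, hm]
    set M := a + 1 + h with hM
    have hM2 : 2 ≤ M := by omega
    have s1 : M < M * M ^ 2 := by nlinarith
    have s2 : M * M ^ 2 ≤ (2 * h + 1) * M * (M ^ 2 + h * (h + 1)) := by
      calc M * M ^ 2 ≤ M * (M ^ 2 + h * (h + 1)) :=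
            Nat.mul_le_mul_left _ (Nat.le_add_right _ _)
        _ ≤ (2 * h + 1) * (M * (M ^ 2 + h * (h + 1))) :=
            Nat.le_mul_of_pos_left _ (by omega)
        _ = (2 * h + 1) * M * (M ^ 2 + h * (h + 1)) := by ring
    omega
  have htr : t < 2 * r := by
    rw [hmt] at hlt
    exact (Nat.pow_lt_pow_iff_right hp.one_lt).mp hlt
  exact ⟨t, ht0, htr, by omega⟩
end

section
/- There are no positive integers x > 1, k even, prime p and positive integer r such that ∑_{i=x}^{x+k-1} i^3 = p^(2r). -/
lemma sum_cubes_formula (b m : ℕ) :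
    ∑ i ∈ Finset.range (2 * m), (b + 1 + i) ^ 3 =
      m * (2 * b + 2 * m + 1) * (m * (2 * b + 2 * m + 1) + b * (b + 1)) := by
  induction m with
  | zero => simp
  | succ n ih =>
    rw [show 2 * (n + 1) = 2 * n + 1 + 1 by ring, Finset.sum_range_succ,
      Finset.sum_range_succ, ih]
    ring

theorem no_solution_even_k (x k p r : ℕ) (hx : 1 < x) (hk : 0 < k) (hke : Even k)
    (hp : p.Prime) (hr : 0 < r) :
    ∑ i ∈ Finset.range k, (x + i) ^ 3 ≠ p ^ (2 * r) := by
  intro h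
  obtain ⟨m, hm⟩ := hke
  set b := x - 1 with hb
  have hxb : x = b + 1 := by omega
  have hb1 : 1 ≤ b := by omega
  have hm1 : 1 ≤ m := by omega
  have hsum : ∑ i ∈ Finset.range k, (x + i) ^ 3 =
      m * (2 * b + 2 * m + 1) * (m * (2 * b + 2 * m + 1) + b * (b + 1)) := by
    rw [hxb, hm, show m + m = 2 * m by ring]
    exact sum_cubes_formula b m
  set d := m * (2 * b + 2 * m + 1) with hd
  rw [hsum] at h
  have hp1 : 1 < p := hp.one_lt
  have hdbig : 2 * b + 3 ≤ d := by rw [hd]; nlinarith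
  have hdvd : d ∣ p ^ (2 * r) := ⟨_, h.symm⟩
  obtain ⟨v, hv, hdv⟩ := (Nat.dvd_prime_pow hp).mp hdvd
  have hs : d + b * (b + 1) = p ^ (2 * r - v) := by
    have h2 : p ^ v * (d + b * (b + 1)) = p ^ v * p ^ (2 * r - v) := by
      rw [← pow_add, ← hdv, h]
      congr 1
      omega
    exact Nat.eq_of_mul_eq_mul_left (by positivity) h2
  have hlt : p ^ v < p ^ (2 * r - v) := by
    rw [← hdv, ← hs]
    nlinarith
  have hvlt : v < 2 * r - v := (Nat.pow_lt_pow_iff_right hp1).mp hlt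
  have hv1 : 1 ≤ v := by
    by_contra hc
    have : v = 0 := by omega
    rw [this, pow_zero] at hdv
    omega
  have hdvd2 : p ^ v ∣ b * (b + 1) := by
    have hbb : b * (b + 1) = p ^ (2 * r - v) - p ^ v := by omega
    rw [hbb]
    exact Nat.dvd_sub (pow_dvd_pow p hvlt.le) dvd_rfl
  have hpd : p ∣ b * (b + 1) :=
    dvd_trans (dvd_pow_self p (by omega : v ≠ 0)) hdvd2
  rcases (Nat.Prime.dvd_mul hp).mp hpd with hpb | hpb1
  · have hcop : Nat.Coprime (p ^ v) (b + 1) := by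
      apply Nat.Coprime.pow_left
      rw [Nat.Prime.coprime_iff_not_dvd hp]
      intro hcon
      have h1 : p ∣ 1 := by simpa using Nat.dvd_sub hcon hpb
      have := Nat.le_of_dvd one_pos h1
      omega
    have hdvdb : p ^ v ∣ b := hcop.dvd_of_dvd_mul_right hdvd2
    have h2 : p ^ v ≤ b := Nat.le_of_dvd (by omega) hdvdb
    have h3 : d ≤ b := hdv ▸ h2
    omega
  · have hcop : Nat.Coprime (p ^ v) b := by
      apply Nat.Coprime.pow_left
      rw [Nat.Prime.coprime_iff_not_dvd hp]
      intro hcon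
      have h1 : p ∣ 1 := by simpa using Nat.dvd_sub hpb1 hcon
      have := Nat.le_of_dvd one_pos h1
      omega
    have hdvdb : p ^ v ∣ b + 1 := hcop.dvd_of_dvd_mul_left hdvd2
    have h2 : p ^ v ≤ b + 1 := Nat.le_of_dvd (by omega) hdvdb
    have h3 : d ≤ b + 1 := hdv ▸ h2
    omega
end

section
/- Let x > 1 and k be positive integers with k odd, let p be a prime and r a positive integer. If ∑_{i=x}^{x+k-1} i^3 = p^(2r), then k = 1 and there exists a positive integer c such that x = p^(2c) and r = 3c. -/
lemma cube_sum_odd (x t : ℕ) :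
    ∑ i ∈ Finset.range (2 * t + 1), (x + i) ^ 3
      = (2 * t + 1) * (x + t) * ((x + t) ^ 2 + t * (t + 1)) := by
  induction t with
  | zero => simp; ring
  | succ n ih =>
    have h : 2 * (n + 1) + 1 = (2 * n + 1) + 1 + 1 := by ring
    rw [h, Finset.sum_range_succ, Finset.sum_range_succ, ih]
    ring

theorem odd_k_solution (x k p r : ℕ) (hx : 1 < x) (hk : 0 < k) (hko : Odd k)
    (hp : p.Prime) (hr : 0 < r)
    (hsum : ∑ i ∈ Finset.range k, (x + i) ^ 3 = p ^ (2 * r)) :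
    k = 1 ∧ ∃ c : ℕ, 0 < c ∧ x = p ^ (2 * c) ∧ r = 3 * c := by
  obtain ⟨t, ht⟩ := hko
  have ht' : k = 2 * t + 1 := by omega
  subst ht'
  rw [cube_sum_odd] at hsum
  rcases Nat.eq_zero_or_pos t with rfl | htpos
  · -- k = 1, x^3 = p^(2r)
    simp at hsum
    have hx3 : x ^ 3 = p ^ (2 * r) := by linarith [hsum]
    have hxd : x ∣ p ^ (2 * r) := ⟨x ^ 2, by rw [← hx3]; ring⟩
    obtain ⟨a, ha, hxa⟩ := (Nat.dvd_prime_pow hp).mp hxd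
    have hpow : p ^ (3 * a) = p ^ (2 * r) := by
      rw [← hx3, hxa]; ring
    have h3a : 3 * a = 2 * r := Nat.pow_right_injective hp.two_le hpow
    have ha2 : 2 ∣ a := by omega
    obtain ⟨c, rfl⟩ := ha2
    refine ⟨rfl, c, by omega, hxa, by omega⟩
  · -- t ≥ 1: contradiction
    exfalso
    have hne : p ^ (2 * r) ≠ 0 := pow_ne_zero _ hp.pos.ne'
    have hk1 : (2 * t + 1) ∣ p ^ (2 * r) :=
      ⟨(x + t) * ((x + t) ^ 2 + t * (t + 1)), by rw [← hsum]; ring⟩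
    have hm1 : (x + t) ∣ p ^ (2 * r) :=
      ⟨(2 * t + 1) * ((x + t) ^ 2 + t * (t + 1)), by rw [← hsum]; ring⟩
    have hq1 : ((x + t) ^ 2 + t * (t + 1)) ∣ p ^ (2 * r) :=
      ⟨(2 * t + 1) * (x + t), by rw [← hsum]; ring⟩
    have pk : p ∣ 2 * t + 1 := by
      obtain ⟨i, hi, hki⟩ := (Nat.dvd_prime_pow hp).mp hk1
      have : i ≠ 0 := by rintro rfl; simp at hki; omega
      exact hki ▸ dvd_pow_self p this
    have pm : p ∣ x + t := by
      obtain ⟨i, hi, hki⟩ := (Nat.dvd_prime_pow hp).mp hm1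
      have : i ≠ 0 := by rintro rfl; simp at hki; omega
      exact hki ▸ dvd_pow_self p this
    have pq : p ∣ (x + t) ^ 2 + t * (t + 1) := by
      obtain ⟨i, hi, hki⟩ := (Nat.dvd_prime_pow hp).mp hq1
      have : i ≠ 0 := by
        rintro rfl; simp at hki
        nlinarith [hki]
      exact hki ▸ dvd_pow_self p this
    have ptt : p ∣ t * (t + 1) := by
      have h2 : p ∣ (x + t) ^ 2 := Dvd.dvd.pow pm (by norm_num)
      have := Nat.dvd_sub pq h2
      simpa using this
    rcases (Nat.Prime.dvd_mul hp).mp ptt with h | h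
    · have : p ∣ 1 := by
        have := Nat.dvd_sub pk (Dvd.dvd.mul_left h 2)
        simpa [Nat.mul_comm] using this
      exact hp.one_lt.ne' (Nat.eq_one_of_dvd_one this)
    · have : p ∣ 1 := by
        have := Nat.dvd_sub (Dvd.dvd.mul_left h 2) pk
        have h2 : 2 * (t + 1) - (2 * t + 1) = 1 := by omega
        rwa [h2] at this
      exact hp.one_lt.ne' (Nat.eq_one_of_dvd_one this)
end

section
/- Let a and b be coprime positive integers and let s be a positive integer. If a^2 = b^2 + 2^(2s), then a = b + 2. -/
theorem pythagorean_pow_two_leg (a b s : ℕ) (ha : 0 < a) (hb : 0 < b) (hs : 0 < s)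
    (hcop : Nat.Coprime a b) (h : a ^ 2 = b ^ 2 + 2 ^ (2 * s)) : a = b + 2 := by
  have hppos : 0 < 2 ^ (2 * s) := Nat.pow_pos (by norm_num)
  have hba : b < a := by
    by_contra hle
    push_neg at hle
    have := Nat.pow_le_pow_left hle 2
    omega
  -- both a and b are odd
  have h2pow : (2:ℕ) ∣ 2 ^ (2 * s) := dvd_pow_self 2 (by omega)
  have hoa : ¬ (2:ℕ) ∣ a := by
    intro h2a
    have h2a2 : (2:ℕ) ∣ a ^ 2 := Dvd.dvd.pow h2a (by norm_num)
    have h2b2 : (2:ℕ) ∣ b ^ 2 := by omega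
    have h2b : (2:ℕ) ∣ b := Nat.Prime.dvd_of_dvd_pow Nat.prime_two h2b2
    have : (2:ℕ) ∣ 1 := hcop ▸ Nat.dvd_gcd h2a h2b
    omega
  have hob : ¬ (2:ℕ) ∣ b := by
    intro h2b
    have h2b2 : (2:ℕ) ∣ b ^ 2 := Dvd.dvd.pow h2b (by norm_num)
    have h2a2 : (2:ℕ) ∣ a ^ 2 := by omega
    exact hoa (Nat.Prime.dvd_of_dvd_pow Nat.prime_two h2a2)
  set d := a - b with hd
  have had : a = b + d := by omega
  have hdpos : 0 < d := by omega
  have hk : d * (2 * b + d) = 2 ^ (2 * s) := by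
    have hk0 : (b + d) ^ 2 = b ^ 2 + 2 ^ (2 * s) := by rw [← had]; exact h
    nlinarith [hk0]
  have hdd : d ∣ 2 ^ (2 * s) := ⟨2 * b + d, hk.symm⟩
  obtain ⟨i, hi2s, hdi⟩ := (Nat.dvd_prime_pow Nat.prime_two).mp hdd
  have hdeven : (2:ℕ) ∣ d := by omega
  have hi1 : 1 ≤ i := by
    by_contra hi0
    interval_cases i
    simp at hdi
    omega
  have hsum : 2 * b + d = 2 ^ (2 * s - i) := by
    have hsplit : 2 ^ (2 * s) = 2 ^ i * 2 ^ (2 * s - i) := by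
      rw [← pow_add]
      congr 1
      omega
    have hd2 : (0:ℕ) < 2 ^ i := Nat.pow_pos (by norm_num)
    apply Nat.eq_of_mul_eq_mul_left hd2
    rw [← hdi, hk, hsplit, hdi]
  have hi_eq : i = 1 := by
    by_contra hne
    have hi2 : 2 ≤ i := by omega
    have h4d : (4:ℕ) ∣ d := by
      rw [hdi]
      calc (4:ℕ) = 2 ^ 2 := rfl
        _ ∣ 2 ^ i := pow_dvd_pow 2 hi2
    have hdge : 2 ≤ d := by omega
    have hsumge : 4 ≤ 2 * b + d := by omega
    have hj2 : 2 ≤ 2 * s - i := by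
      by_contra hj
      push_neg at hj
      have : 2 ^ (2 * s - i) ≤ 2 ^ 1 := Nat.pow_le_pow_right (by norm_num) (by omega)
      omega
    have h4s : (4:ℕ) ∣ 2 * b + d := by
      rw [hsum]
      calc (4:ℕ) = 2 ^ 2 := rfl
        _ ∣ 2 ^ (2 * s - i) := pow_dvd_pow 2 hj2
    have : (2:ℕ) ∣ b := by omega
    exact hob this
  have : d = 2 := by rw [hdi, hi_eq]; rfl
  omega
end

section
/- Let x > 1 and l be positive integers, set k = 2l − 1, let p be a prime and let r, t be positive integers with x + l − 1 = p^t. If ∑_{i=x}^{x+k-1} i^3 = p^(2r) and v_p((x−1)x/2) < t, then v_p((x−1)x/2) = v_p((x+k−1)(x+k)/2). -/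
lemma padic_add_aux (p t : ℕ) (hp : p.Prime) (A m : ℕ) (hA : A ≠ 0)
    (hq : padicValNat p A < t) :
    padicValNat p A = padicValNat p (A + p ^ t * m) := by
  haveI : Fact p.Prime := ⟨hp⟩
  have hB : A + p ^ t * m ≠ 0 := by positivity
  have h1 : p ^ padicValNat p A ∣ A + p ^ t * m :=
    dvd_add pow_padicValNat_dvd (Dvd.dvd.mul_right (pow_dvd_pow p hq.le) m)
  have h2 : ¬ p ^ (padicValNat p A + 1) ∣ A + p ^ t * m := by
    intro h
    have hdvd : p ^ (padicValNat p A + 1) ∣ p ^ t * m :=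
      Dvd.dvd.mul_right (pow_dvd_pow p hq) m
    have : p ^ (padicValNat p A + 1) ∣ A := (Nat.dvd_add_iff_left hdvd).mpr h
    exact pow_succ_padicValNat_not_dvd hA this
  have l1 := (padicValNat_dvd_iff_le hB).mp h1
  have l2 : ¬ (padicValNat p A + 1 ≤ padicValNat p (A + p ^ t * m)) :=
    fun h => h2 ((padicValNat_dvd_iff_le hB).mpr h)
  omega

theorem valuation_eq_of_odd_k_lt (x l k p r t : ℕ) (hx : 1 < x) (hl : 0 < l)
    (hkdef : k = 2 * l - 1) (hp : p.Prime) (hr : 0 < r) (ht : 0 < t)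
    (hpt : x + l - 1 = p ^ t)
    (hsum : ∑ i ∈ Finset.range k, (x + i) ^ 3 = p ^ (2 * r))
    (hq : padicValNat p ((x - 1) * x / 2) < t) :
    padicValNat p ((x - 1) * x / 2) = padicValNat p ((x + k - 1) * (x + k) / 2) := by
  obtain ⟨a, rfl⟩ : ∃ a, x = a + 2 := ⟨x - 2, by omega⟩
  obtain ⟨l', rfl⟩ : ∃ l', l = l' + 1 := ⟨l - 1, by omega⟩
  have hk : k = 2 * l' + 1 := by omega
  subst hk
  have hP : p ^ t = a + l' + 2 := by omega
  have key : (a + 2 + (2 * l' + 1) - 1) * (a + 2 + (2 * l' + 1)) / 2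
      = (a + 2 - 1) * (a + 2) / 2 + p ^ t * (2 * l' + 1) := by
    have h2 : (a + 2 + (2 * l' + 1) - 1) * (a + 2 + (2 * l' + 1))
        = (a + 2 - 1) * (a + 2) + 2 * (p ^ t * (2 * l' + 1)) := by
      have e1 : a + 2 + (2 * l' + 1) - 1 = a + 2 * l' + 2 := by omega
      have e2 : a + 2 - 1 = a + 1 := by omega
      rw [e1, e2, hP]; ring
    rw [h2, Nat.add_mul_div_left _ _ (by norm_num : 0 < 2)]
  rw [key]
  exact padic_add_aux p t hp _ _ (by
    have e2 : a + 2 - 1 = a + 1 := by omega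
    rw [e2]
    have := Nat.div_pos (show 2 ≤ (a + 1) * (a + 2) by nlinarith) two_pos
    omega) hq
end

section
/- Let x > 1 and l be positive integers, set k = 2l − 1, let p be a prime and let r, t be positive integers with x + l − 1 = p^t. If ∑_{i=x}^{x+k-1} i^3 = p^(2r) and v_p((x−1)x/2) = t, then l = 1, x = p^t, p is odd, and 2r = 3t. -/
lemma sum4cubes (a : ℤ) (n : ℕ) :
    4 * ∑ i ∈ Finset.range n, (a + i) ^ 3
      = ((a + n) * (a + n - 1)) ^ 2 - (a * (a - 1)) ^ 2 := by
  induction n with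
  | zero => simp
  | succ n ih =>
    rw [Finset.sum_range_succ, mul_add, ih]
    push_cast
    ring

theorem odd_k_q_eq_t (x l k p r t : ℕ) (hx : 1 < x) (hl : 0 < l)
    (hkdef : k = 2 * l - 1) (hp : p.Prime) (hr : 0 < r) (ht : 0 < t)
    (hpt : x + l - 1 = p ^ t)
    (hsum : ∑ i ∈ Finset.range k, (x + i) ^ 3 = p ^ (2 * r))
    (hq : padicValNat p ((x - 1) * x / 2) = t) :
    l = 1 ∧ x = p ^ t ∧ Odd p ∧ 2 * r = 3 * t := by
  obtain ⟨a, rfl⟩ : ∃ a, l = a + 1 := ⟨l - 1, by omega⟩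
  obtain ⟨b, rfl⟩ : ∃ b, x = b + 2 := ⟨x - 2, by omega⟩
  subst hkdef
  have hpt' : b + a + 2 = p ^ t := by omega
  -- integer closed form
  have h1 := sum4cubes ((b : ℤ) + 2) (2 * (a + 1) - 1)
  have hsz : (∑ i ∈ Finset.range (2 * (a + 1) - 1), ((b : ℤ) + 2 + i) ^ 3)
      = (p : ℤ) ^ (2 * r) := by exact_mod_cast hsum
  have hn : ((2 * (a + 1) - 1 : ℕ) : ℤ) = 2 * a + 1 := by push_cast; omega
  have hpz : ((b : ℤ) + a + 2) = (p : ℤ) ^ t := by exact_mod_cast hpt'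
  have hb : (b : ℤ) = (p : ℤ) ^ t - a - 2 := by linarith
  have h4 : 4 * ((p : ℤ) ^ (2 * r))
      = (((b : ℤ) + 2 + ((2 * (a + 1) - 1 : ℕ) : ℤ))
          * ((b : ℤ) + 2 + ((2 * (a + 1) - 1 : ℕ) : ℤ) - 1)) ^ 2
        - (((b : ℤ) + 2) * ((b : ℤ) + 2 - 1)) ^ 2 := by rw [← hsz, h1]
  rw [hn, hb] at h4
  have h5 : 4 * ((2 * (a : ℤ) + 1) * (p : ℤ) ^ t
      * ((p : ℤ) ^ t * (p : ℤ) ^ t + (a + 1) * a)) = 4 * (p : ℤ) ^ (2 * r) := by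
    rw [h4]; ring
  have keyZ : (2 * (a : ℤ) + 1) * (p : ℤ) ^ t
      * ((p : ℤ) ^ t * (p : ℤ) ^ t + (a + 1) * a) = (p : ℤ) ^ (2 * r) :=
    mul_left_cancel₀ (by norm_num) h5
  have keyN : (2 * a + 1) * p ^ t * (p ^ t * p ^ t + (a + 1) * a) = p ^ (2 * r) := by
    exact_mod_cast keyZ
  -- the middle factor is a power of p
  have hdvd : p ^ t * p ^ t + (a + 1) * a ∣ p ^ (2 * r) :=
    ⟨(2 * a + 1) * p ^ t, by rw [← keyN]; ring⟩
  obtain ⟨s, hs, hseq⟩ := (Nat.dvd_prime_pow hp).mp hdvd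
  have h2t : p ^ t * p ^ t = p ^ (2 * t) := by rw [two_mul, pow_add]
  rw [h2t] at hseq
  -- show a = 0
  have ha : a = 0 := by
    by_contra ha
    have hle : p ^ (2 * t) ≤ p ^ s := by omega
    have hts : 2 * t ≤ s := (Nat.pow_le_pow_iff_right hp.one_lt).mp hle
    have hdvd2 : p ^ (2 * t) ∣ (a + 1) * a := by
      have : (a + 1) * a = p ^ s - p ^ (2 * t) := by omega
      rw [this]
      exact Nat.dvd_sub (pow_dvd_pow p hts) dvd_rfl
    have hle2 : p ^ (2 * t) ≤ (a + 1) * a :=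
      Nat.le_of_dvd (by positivity) hdvd2
    have hlt : (a + 1) * a < p ^ t * p ^ t :=
      Nat.mul_lt_mul_of_lt_of_lt (by omega) (by omega)
    omega
  subst ha
  have hxval : b + 2 = p ^ t := by omega
  -- 2*r = 3*t
  have key3 : p ^ (t + (t + t)) = p ^ (2 * r) := by
    rw [pow_add, pow_add, ← keyN]; ring
  have hrt : t + (t + t) = 2 * r := Nat.pow_right_injective hp.two_le key3
  -- p is odd
  have hp2 : p ≠ 2 := by
    rintro rfl
    obtain ⟨t', rfl⟩ : ∃ t', t = t' + 1 := ⟨t - 1, by omega⟩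
    have hxm : (b + 2 - 1) * (b + 2) / 2 = (2 ^ (t' + 1) - 1) * 2 ^ t' := by
      rw [hxval, pow_succ, Nat.mul_div_assoc _ (dvd_mul_left 2 (2 ^ t')),
        Nat.mul_div_cancel _ two_pos]
    rw [hxm] at hq
    have hodd : ¬ (2 : ℕ) ∣ (2 ^ (t' + 1) - 1) := by
      intro h
      have h2 : (2 : ℕ) ∣ 2 ^ (t' + 1) := dvd_pow_self 2 (Nat.succ_ne_zero t')
      have : (2 : ℕ) ^ (t' + 1) ≥ 2 := Nat.one_lt_two_pow (by omega)
      omega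
    rw [padicValNat.mul (by omega) (by positivity),
      padicValNat.eq_zero_of_not_dvd hodd, padicValNat.prime_pow] at hq
    omega
  refine ⟨rfl, hxval, hp.odd_of_ne_two hp2, by omega⟩
end
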